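/- Let A, K, a, b, E, δ be positive real numbers with δ ≥ b/E and a ≥ 1, and set γ = (b/E)·K/(1/E + K). Define F1(x, y) = −A·(x + K)·x/K − (a/E)·(x + K)·y/(1/E + x + K) and F2(x, y) = −((γ + δ·y)/(1 + y))·y + (b/E)·(x + K)·y/(1/E + x + K). Then for all x ≥ 0 and y > 0, the derivative of V(x,y) = (b/(E·K))·x² + (1/E + K)·y² along the vector field (F1, F2) is strictly negative: 2·(b/(E·K))·x·F1(x,y) + 2·(1/E + K)·y·F2(x,y) < 0. -/

import Mathlib

open Real

set_option maxHeartbeats 800000 in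
theorem lyapunov_derivative_negative (A K a b E δ γ : ℝ)
    (hA : 0 < A) (hK : 0 < K) (ha0 : 0 < a) (hb : 0 < b) (hE : 0 < E) (hδ : 0 < δ)
    (hδE : b / E ≤ δ) (ha : 1 ≤ a)
    (hγ : γ = (b / E) * K / (1 / E + K)) :
    ∀ x y : ℝ, 0 ≤ x → 0 < y →
      2 * (b / (E * K)) * x *
        (-(A * (x + K) * x / K) - (a / E) * (x + K) * y / (1 / E + x + K)) +
      2 * (1 / E + K) * y *
        (-((γ + δ * y) / (1 + y)) * y + (b / E) * (x + K) * y / (1 / E + x + K)) < 0 := by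
  intro x y hx hy
  have h1y : (0:ℝ) < 1 + y := by linarith
  obtain ⟨D, hDdef⟩ : ∃ D : ℝ, D = 1 / E + x + K := ⟨_, rfl⟩
  obtain ⟨P, hPdef⟩ : ∃ P : ℝ, P = 1 / E + K := ⟨_, rfl⟩
  rw [← hDdef, ← hPdef]
  have hD : 0 < D := by rw [hDdef]; positivity
  have hP : 0 < P := by rw [hPdef]; positivity
  have hDx : x < D := by
    rw [hDdef]
    have : 0 < 1 / E := by positivity
    linarith
  -- key identity using hγ
  have id1 : (b / E) * (x + K) / D - γ = b * x / (E ^ 2 * D * P) := by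
    rw [hγ, ← hPdef, hDdef, hPdef]
    field_simp
    ring
  -- decomposition of the Lyapunov derivative
  have hT : 2 * (b / (E * K)) * x *
        (-(A * (x + K) * x / K) - (a / E) * (x + K) * y / D) +
      2 * P * y *
        (-((γ + δ * y) / (1 + y)) * y + (b / E) * (x + K) * y / D)
      = -(2 * (b / (E * K)) * A * (x + K) * x ^ 2 / K)
        - 2 * (b / (E * K)) * (a / E) * (x + K) * x * y / D
        + 2 * P * y ^ 2 * ((b / E) * (x + K) / D - γ)
        - 2 * P * (δ - γ) * y ^ 3 / (1 + y) := by
    field_simp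
    ring
  rw [hT, id1]
  -- term A is nonpositive
  have hA1 : 0 ≤ 2 * (b / (E * K)) * A * (x + K) * x ^ 2 / K := by positivity
  -- simplify cross term
  have hc : 2 * P * y ^ 2 * (b * x / (E ^ 2 * D * P)) = 2 * b * x * y ^ 2 / (E ^ 2 * D) := by
    field_simp
  -- γ bound: b/(E^2 P) ≤ δ - γ
  have hγP : γ * P = b / E * K := by
    rw [hγ, ← hPdef]
    field_simp
  have hγlt : b / (E ^ 2 * P) ≤ δ - γ := by
    rw [div_le_iff₀ (by positivity)]
    have h1 : b / E ≤ δ := hδE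
    have h2 : b / E * P = b / E ^ 2 + b / E * K := by
      rw [hPdef]; field_simp
    have h3 : γ * P = b / E * K := hγP
    have h4 : b / E ^ 2 * E ^ 2 = b := by field_simp
    have h6 : b / E ^ 2 ≤ δ * P - γ * P := by
      nlinarith [mul_le_mul_of_nonneg_right h1 hP.le]
    nlinarith [mul_le_mul_of_nonneg_right h6 (le_of_lt (pow_pos hE 2))]
  have hterm4 : 2 * b * y ^ 3 / (E ^ 2 * (1 + y)) ≤ 2 * P * (δ - γ) * y ^ 3 / (1 + y) := by
    rw [div_le_div_iff₀ (by positivity) h1y]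
    have h7 : b ≤ (δ - γ) * (E ^ 2 * P) := (div_le_iff₀ (by positivity)).mp hγlt
    nlinarith [mul_le_mul_of_nonneg_right h7
      (show (0:ℝ) ≤ 2 * y ^ 3 * (1 + y) by positivity)]
  -- main strict inequality
  have step1 : 2 * b * x * y ^ 2 / (E ^ 2 * D) <
      2 * b * x * y / (E ^ 2 * D) + 2 * b * y ^ 3 / (E ^ 2 * (1 + y)) := by
    rw [div_add_div _ _ (by positivity : (E ^ 2 * D) ≠ 0) (by positivity : (E ^ 2 * (1 + y)) ≠ 0),
      div_lt_div_iff₀ (by positivity) (by positivity)]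
    have key : x * y ^ 3 < x * y + D * y ^ 3 := by
      nlinarith [mul_lt_mul_of_pos_right hDx (show (0:ℝ) < y ^ 3 by positivity),
        mul_nonneg hx hy.le]
    nlinarith [mul_lt_mul_of_pos_left key (show (0:ℝ) < 2 * b * E ^ 2 * E ^ 2 * D by positivity),
      mul_nonneg hx hy.le, mul_pos hD h1y]
  have step2 : 2 * b * x * y / (E ^ 2 * D) ≤
      2 * (b / (E * K)) * (a / E) * (x + K) * x * y / D := by
    have hK2 : K ≤ a * (x + K) := by nlinarith
    have hB : 2 * (b / (E * K)) * (a / E) * (x + K) * x * y / D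
        = 2 * b * (a * (x + K)) * x * y / (E ^ 2 * K * D) := by
      field_simp
    rw [hB, div_le_div_iff₀ (by positivity) (by positivity)]
    nlinarith [mul_le_mul_of_nonneg_right hK2
      (show (0:ℝ) ≤ x * y * (2 * b * E ^ 2 * D) by positivity)]
  rw [hc]
  linarith
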